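/- Let n, m be positive integers. Consider the coefficient matrix A of the standard-form linear system Σ_{j=1}^m f_{ij} = 1 (i = 1,…,n), Σ_{i=1}^n f_{ij} + s_j = ub_j (j = 1,…,m), Σ_{i=1}^n f_{ij} − e_j = lb_j (j = 1,…,m): concretely, A is the integer matrix with rows indexed by Fin n ⊕ Fin m ⊕ Fin m and columns indexed by (Fin n × Fin m) ⊕ Fin m ⊕ Fin m, where the row indexed by i ∈ Fin n has entry 1 in flow column (i', j) iff i' = i and 0 in all slack and excess columns; the row indexed by the first copy of j ∈ Fin m has entry 1 in flow column (i, j') iff j' = j, entry 1 in slack column j' iff j' = j, and 0 in all excess columns; and the row indexed by the second copy of j ∈ Fin m has entry 1 in flow column (i, j') iff j' = j, entry 0 in all slack columns, and entry −1 in excess column j' iff j' = j. Then A is totally unimodular. -/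

import Mathlib

open Matrix

lemma bipartite_incidence_TU (n m : ℕ) :
    (Matrix.of (fun r : Fin n ⊕ Fin m => fun c : Fin n × Fin m =>
      Sum.elim (fun i => if c.1 = i then (1:ℤ) else 0)
               (fun j => if c.2 = j then (1:ℤ) else 0) r)).IsTotallyUnimodular := by
  intro k
  induction k with
  | zero => intro f g _ _; exact ⟨1, by simp⟩
  | succ k ih =>
    intro f g hf hg
    set M := (Matrix.of (fun r : Fin n ⊕ Fin m => fun c : Fin n × Fin m =>
      Sum.elim (fun i => if c.1 = i then (1:ℤ) else 0)
               (fun j => if c.2 = j then (1:ℤ) else 0) r)).submatrix f g with hM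
    by_cases hcol : ∀ x : Fin (k+1), (∃ r, f r = Sum.inl (g x).1) ∧ (∃ r, f r = Sum.inr (g x).2)
    · refine ⟨0, ?_⟩
      rw [SignType.coe_zero, eq_comm, ← Matrix.exists_vecMul_eq_zero_iff]
      refine ⟨fun r => Sum.elim (fun _ => (1:ℤ)) (fun _ => -1) (f r), ?_, ?_⟩
      · intro h
        have h0 := congr_fun h 0
        rcases hfr : f 0 with i | j <;> simp [hfr] at h0
      · ext x
        obtain ⟨⟨rl, hrl⟩, ⟨rr, hrr⟩⟩ := hcol x
        have key : ∀ r : Fin (k+1),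
            Sum.elim (fun _ => (1:ℤ)) (fun _ => -1) (f r) * M r x
            = (if f r = Sum.inl (g x).1 then (1:ℤ) else 0)
              - (if f r = Sum.inr (g x).2 then (1:ℤ) else 0) := by
          intro r
          rcases hfr : f r with i | j
          · simp only [hM, Matrix.submatrix_apply, Matrix.of_apply, hfr, Sum.elim_inl,
              Sum.inl.injEq, one_mul, reduceCtorEq, if_false, sub_zero]
            rcases eq_or_ne (g x).1 i with h | h
            · simp [h]
            · simp [h, Ne.symm h]
          · simp only [hM, Matrix.submatrix_apply, Matrix.of_apply, hfr, Sum.elim_inr,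
              Sum.inr.injEq, neg_one_mul, reduceCtorEq, if_false, zero_sub]
            rcases eq_or_ne (g x).2 j with h | h
            · simp [h]
            · simp [h, Ne.symm h]
        have hone : ∀ (a : Fin n ⊕ Fin m) (r0 : Fin (k+1)), f r0 = a →
            (∑ r, if f r = a then (1:ℤ) else 0) = 1 := by
          intro a r0 h0
          rw [Fintype.sum_eq_single r0 (fun b hb => if_neg ?_), if_pos h0]
          intro he
          exact hb (hf (he.trans h0.symm))
        simp only [Matrix.vecMul, dotProduct, Pi.zero_apply]
        rw [Finset.sum_congr rfl (fun r _ => key r), Finset.sum_sub_distrib,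
          hone _ rl hrl, hone _ rr hrr, sub_self]
    · obtain ⟨x, hx⟩ := not_forall.mp hcol
      rw [not_and_or] at hx
      simp only [not_exists] at hx
      have hsupp : ∀ r, M r x ≠ 0 →
          f r = Sum.inl (g x).1 ∨ f r = Sum.inr (g x).2 := by
        intro r hr
        rcases hfr : f r with i | j <;>
          simp only [hM, Matrix.submatrix_apply, Matrix.of_apply, hfr, Sum.elim_inl,
            Sum.elim_inr, ne_eq, ite_eq_right_iff, not_forall] at hr
        · exact Or.inl (by rw [hr.1])
        · exact Or.inr (by rw [hr.1])
      by_cases hex : ∃ r0, M r0 x ≠ 0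
      · obtain ⟨r0, hr0⟩ := hex
        have huniq : ∀ r, M r x ≠ 0 → r = r0 := by
          intro r hr
          rcases hx with hx | hx
          · have h1 := (hsupp r hr).resolve_left (hx r)
            have h2 := (hsupp r0 hr0).resolve_left (hx r0)
            exact hf (h1.trans h2.symm)
          · have h1 := (hsupp r hr).resolve_right (hx r)
            have h2 := (hsupp r0 hr0).resolve_right (hx r0)
            exact hf (h1.trans h2.symm)
        have hone : M r0 x = 1 := by
          rcases hfr : f r0 with i | j <;>
            simp only [hM, Matrix.submatrix_apply, Matrix.of_apply, hfr, Sum.elim_inl,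
              Sum.elim_inr] at hr0 ⊢ <;>
            split_ifs at hr0 ⊢ <;> simp at hr0 ⊢
        rw [Matrix.det_succ_column M x,
          Fintype.sum_eq_single r0 (fun b hb => ?_)]
        · rw [hone, mul_one]
          have hd := ih (f ∘ r0.succAbove) (g ∘ x.succAbove)
            (hf.comp (Fin.succAbove_right_injective))
            (hg.comp (Fin.succAbove_right_injective))
          change _ ∈ MonoidHom.mrange SignType.castHom.toMonoidHom
          refine mul_mem (pow_mem ?_ _) hd
          exact ⟨-1, by simp⟩
        · have : M b x = 0 := by
            by_contra hc
            exact hb (huniq b hc)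
          rw [this, mul_zero, zero_mul]
      · push_neg at hex
        refine ⟨0, ?_⟩
        rw [SignType.coe_zero, eq_comm]
        exact Matrix.det_eq_zero_of_column_eq_zero x hex

/-- The standard-form constraint matrix of the flow reformulation of the
`bin_counts` constraint (with slack variables `s_j` and excess variables `e_j`)
is totally unimodular. -/
theorem bin_counts_standard_form_matrix_isTotallyUnimodular
    (n m : ℕ) (hn : 0 < n) (hm : 0 < m) :
    (Matrix.of (fun r : Fin n ⊕ (Fin m ⊕ Fin m) =>
      fun c : (Fin n × Fin m) ⊕ (Fin m ⊕ Fin m) =>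
        match r, c with
        | Sum.inl i, Sum.inl (i', _) => if i' = i then (1 : ℤ) else 0
        | Sum.inl _, Sum.inr _ => 0
        | Sum.inr (Sum.inl j), Sum.inl (_, j') => if j' = j then (1 : ℤ) else 0
        | Sum.inr (Sum.inl j), Sum.inr (Sum.inl j') => if j' = j then (1 : ℤ) else 0
        | Sum.inr (Sum.inl _), Sum.inr (Sum.inr _) => 0
        | Sum.inr (Sum.inr j), Sum.inl (_, j') => if j' = j then (1 : ℤ) else 0
        | Sum.inr (Sum.inr _), Sum.inr (Sum.inl _) => 0
        | Sum.inr (Sum.inr j), Sum.inr (Sum.inr j') => if j' = j then (-1 : ℤ) else 0)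
      ).IsTotallyUnimodular := by
  -- the flow block, with the two bin-rows duplicated
  have hB : ((Matrix.of (fun r : Fin n ⊕ Fin m => fun c : Fin n × Fin m =>
      Sum.elim (fun i => if c.1 = i then (1:ℤ) else 0)
               (fun j => if c.2 = j then (1:ℤ) else 0) r)).submatrix
        (Sum.elim Sum.inl (Sum.elim Sum.inr Sum.inr) :
          Fin n ⊕ (Fin m ⊕ Fin m) → Fin n ⊕ Fin m)
        id).IsTotallyUnimodular :=
    (bipartite_incidence_TU n m).submatrix _ _
  -- append unit rows (the slack/excess columns, transposed)
  set E : Matrix (Fin m ⊕ Fin m) (Fin n ⊕ (Fin m ⊕ Fin m)) ℤ :=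
    fun u c => Sum.elim
      (fun j => if c = Sum.inr (Sum.inl j) then (1:ℤ) else 0)
      (fun j => if c = Sum.inr (Sum.inr j) then (-1:ℤ) else 0) u with hE
  have hEunit : Nonempty (Fin n ⊕ (Fin m ⊕ Fin m)) → ∀ u : Fin m ⊕ Fin m,
      ∃ c, ∃ s : SignType, E u = Pi.single c s.cast := by
    intro _ u
    rcases u with j | j
    · exact ⟨Sum.inr (Sum.inl j), SignType.pos, funext fun c => by
        simp [hE, Pi.single_apply]⟩
    · exact ⟨Sum.inr (Sum.inr j), SignType.neg, funext fun c => by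
        simp [hE, Pi.single_apply]⟩
  have hT := ((hB.transpose.fromRows_unitlike hEunit).transpose :
    (Matrix.fromRows _ E)ᵀ.IsTotallyUnimodular)
  convert hT using 1
  ext r c
  rcases r with i | j | j <;> rcases c with ⟨i', j'⟩ | j' | j' <;>
    simp only [Matrix.transpose_apply, Matrix.fromRows_apply_inl, Matrix.fromRows_apply_inr] <;>
    simp [hE, eq_comm]
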